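/- For a row-stochastic matrix P with γ ∈ [0,1) and θ* = (I-γP)⁻¹r: if θ̂ denotes the unique fixed point of the operator J(θ) = T(θ) - T(θ̄) + T̃(θ̄), where T(θ) = r + γPθ and T̃(θ) = r̂ + γP̂θ for some vector r̂ and matrix P̂, then θ̂ - θ* = (I - γP)⁻¹ (r̃ - r) where r̃ = r̂ + γ(P̂ - P)θ̄. Moreover ‖θ̂ - θ*‖∞ ≤ ‖(I-γP)⁻¹(r̂ - r)‖∞ + γ‖(I-γP)⁻¹(P̂-P)θ*‖∞ + (γ/(1-γ))‖(P̂-P)(θ̄ - θ*)‖∞. -/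

import Mathlib

open Matrix BigOperators

private lemma stoch_mulVec_norm {D : ℕ} (P : Matrix (Fin D) (Fin D) ℝ)
    (hPnonneg : ∀ i j, 0 ≤ P i j) (hProw : ∀ i, ∑ j, P i j = 1)
    (v : Fin D → ℝ) : ‖P.mulVec v‖ ≤ ‖v‖ := by
  rw [pi_norm_le_iff_of_nonneg (norm_nonneg v)]
  intro i
  calc ‖P.mulVec v i‖ = |∑ j, P i j * v j| := rfl
    _ ≤ ∑ j, |P i j * v j| := Finset.abs_sum_le_sum_abs _ _
    _ ≤ ∑ j, P i j * ‖v‖ := by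
        apply Finset.sum_le_sum
        intro j _
        rw [abs_mul, abs_of_nonneg (hPnonneg i j)]
        exact mul_le_mul_of_nonneg_left (norm_le_pi_norm v j) (hPnonneg i j)
    _ = ‖v‖ := by rw [← Finset.sum_mul, hProw, one_mul]

theorem recentered_fixed_point_error {D : ℕ}
    (P Phat : Matrix (Fin D) (Fin D) ℝ)
    (hPnonneg : ∀ i j, 0 ≤ P i j) (hProw : ∀ i, ∑ j, P i j = 1)
    (γ : ℝ) (hγ0 : 0 ≤ γ) (hγ1 : γ < 1)
    (r rhat : Fin D → ℝ) (θbar : Fin D → ℝ)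
    (θstar : Fin D → ℝ) (hθstar : θstar = (1 - γ • P)⁻¹.mulVec r)
    (rtil : Fin D → ℝ) (hrtil : rtil = rhat + γ • (Phat - P).mulVec θbar)
    (θhat : Fin D → ℝ) (hfix : rtil + γ • P.mulVec θhat = θhat) :
    θhat - θstar = (1 - γ • P)⁻¹.mulVec (rtil - r) ∧
    ‖θhat - θstar‖ ≤
      ‖(1 - γ • P)⁻¹.mulVec (rhat - r)‖
      + γ * ‖(1 - γ • P)⁻¹.mulVec ((Phat - P).mulVec θstar)‖
      + (γ / (1 - γ)) * ‖(Phat - P).mulVec (θbar - θstar)‖ := by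
  set A : Matrix (Fin D) (Fin D) ℝ := 1 - γ • P with hA
  -- A.mulVec v = v - γ • P.mulVec v
  have hAmul : ∀ v : Fin D → ℝ, A.mulVec v = v - γ • P.mulVec v := by
    intro v
    simp [hA, sub_mulVec, smul_mulVec]
  -- injectivity
  have hinj : Function.Injective A.mulVec := by
    intro u w huw
    rw [hAmul, hAmul] at huw
    have h : u - w = γ • P.mulVec (u - w) := by
      have := sub_eq_zero.mpr huw
      rw [show u - γ • P.mulVec u - (w - γ • P.mulVec w)
          = (u - w) - γ • P.mulVec (u - w) by
        rw [Matrix.mulVec_sub]; module] at this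
      exact sub_eq_zero.mp this
    have hnorm : ‖u - w‖ ≤ γ * ‖u - w‖ := by
      calc ‖u - w‖ = ‖γ • P.mulVec (u - w)‖ := by rw [← h]
        _ = γ * ‖P.mulVec (u - w)‖ := by rw [norm_smul, Real.norm_of_nonneg hγ0]
        _ ≤ γ * ‖u - w‖ := by
            exact mul_le_mul_of_nonneg_left
              (stoch_mulVec_norm P hPnonneg hProw _) hγ0
    have : (1 - γ) * ‖u - w‖ ≤ 0 := by linarith
    have hz : ‖u - w‖ ≤ 0 := by
      nlinarith [norm_nonneg (u - w)]
    exact sub_eq_zero.mp (norm_le_zero_iff.mp hz)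
  have hunit : IsUnit A := mulVec_injective_iff_isUnit.mp hinj
  have hdet : IsUnit A.det := (isUnit_iff_isUnit_det A).mp hunit
  have hinvmul : ∀ v : Fin D → ℝ, A⁻¹.mulVec (A.mulVec v) = v := by
    intro v
    rw [Matrix.mulVec_mulVec, Matrix.nonsing_inv_mul A hdet, Matrix.one_mulVec]
  have hmulinv : ∀ v : Fin D → ℝ, A.mulVec (A⁻¹.mulVec v) = v := by
    intro v
    rw [Matrix.mulVec_mulVec, Matrix.mul_nonsing_inv A hdet, Matrix.one_mulVec]
  -- bound on A⁻¹
  have hinvbound : ∀ v : Fin D → ℝ, ‖A⁻¹.mulVec v‖ ≤ ‖v‖ / (1 - γ) := by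
    intro v
    set u := A⁻¹.mulVec v with hu
    have h1 : v = u - γ • P.mulVec u := by rw [hu, ← hAmul, hmulinv]
    have h2 : ‖u‖ ≤ ‖v‖ + γ * ‖u‖ := by
      calc ‖u‖ = ‖v + γ • P.mulVec u‖ := by rw [h1]; congr 1; module
        _ ≤ ‖v‖ + ‖γ • P.mulVec u‖ := norm_add_le _ _
        _ ≤ ‖v‖ + γ * ‖u‖ := by
            rw [norm_smul, Real.norm_of_nonneg hγ0]
            exact (add_le_add_iff_left _).mpr (mul_le_mul_of_nonneg_left
              (stoch_mulVec_norm P hPnonneg hProw u) hγ0)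
    rw [le_div_iff₀ (by linarith)]
    nlinarith
  -- A θstar = r
  have hAθstar : A.mulVec θstar = r := by rw [hθstar, hmulinv]
  -- A θhat = rtil
  have hAθhat : A.mulVec θhat = rtil := by
    rw [hAmul]
    exact (eq_sub_of_add_eq hfix).symm
  -- main identity
  have hmain : θhat - θstar = A⁻¹.mulVec (rtil - r) := by
    have : A.mulVec (θhat - θstar) = rtil - r := by
      rw [Matrix.mulVec_sub, hAθstar, hAθhat]
    rw [← this, hinvmul]
  refine ⟨hmain, ?_⟩
  -- decomposition
  have hdecomp : rtil - r = (rhat - r) + γ • (Phat - P).mulVec θstar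
      + γ • (Phat - P).mulVec (θbar - θstar) := by
    rw [hrtil, Matrix.mulVec_sub]
    module
  have hsplit : θhat - θstar = A⁻¹.mulVec (rhat - r)
      + γ • A⁻¹.mulVec ((Phat - P).mulVec θstar)
      + γ • A⁻¹.mulVec ((Phat - P).mulVec (θbar - θstar)) := by
    rw [hmain, hdecomp, Matrix.mulVec_add, Matrix.mulVec_add,
      Matrix.mulVec_smul, Matrix.mulVec_smul]
  rw [hsplit]
  have t1 := norm_add_le (A⁻¹.mulVec (rhat - r)
      + γ • A⁻¹.mulVec ((Phat - P).mulVec θstar))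
      (γ • A⁻¹.mulVec ((Phat - P).mulVec (θbar - θstar)))
  have t2 := norm_add_le (A⁻¹.mulVec (rhat - r))
      (γ • A⁻¹.mulVec ((Phat - P).mulVec θstar))
  have h3 : ‖γ • A⁻¹.mulVec ((Phat - P).mulVec (θbar - θstar))‖
      ≤ (γ / (1 - γ)) * ‖(Phat - P).mulVec (θbar - θstar)‖ := by
    rw [norm_smul, Real.norm_of_nonneg hγ0]
    have := hinvbound ((Phat - P).mulVec (θbar - θstar))
    calc γ * ‖A⁻¹.mulVec ((Phat - P).mulVec (θbar - θstar))‖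
        ≤ γ * (‖(Phat - P).mulVec (θbar - θstar)‖ / (1 - γ)) :=
          mul_le_mul_of_nonneg_left this hγ0
      _ = (γ / (1 - γ)) * ‖(Phat - P).mulVec (θbar - θstar)‖ := by ring
  have h2 : ‖γ • A⁻¹.mulVec ((Phat - P).mulVec θstar)‖
      = γ * ‖A⁻¹.mulVec ((Phat - P).mulVec θstar)‖ := by
    rw [norm_smul, Real.norm_of_nonneg hγ0]
  linarith
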